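/- Let C be a finite algebra, A, B ≤ C, and suppose Aut(C) acts transitively on the copies of A in C. Then [A:B]·[B:C] = [A:C]·[A:B:C]_iso, where [X:Y] denotes the number of subalgebras of Y isomorphic to X, and [A:B:C]_iso the number of copies of B in C containing A. -/
import Mathlib


/-- `B₀` is a copy of `B` in `C`: a subgroup of `C` isomorphic to `B`. -/
def IsCopy {C : Type*} [Group C] (B₀ B : Subgroup C) : Prop :=
  Nonempty (B₀ ≃* B)

namespace StmtAux

variable {C : Type*} [Group C]

/-- Transport a subgroup of `C` contained in `B₀` along an isomorphism `B₀ ≃* B`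
to a subgroup of `C` contained in `B`. -/
noncomputable def F (B₀ B : Subgroup C) (e : B₀ ≃* B) (A₀ : Subgroup C) : Subgroup C :=
  ((A₀.subgroupOf B₀).map e.toMonoidHom).map B.subtype

lemma F_le (B₀ B : Subgroup C) (e : B₀ ≃* B) (A₀ : Subgroup C) : F B₀ B e A₀ ≤ B :=
  Subgroup.map_subtype_le _

lemma F_F (B₀ B : Subgroup C) (e : B₀ ≃* B) {A₀ : Subgroup C} (h : A₀ ≤ B₀) :
    F B B₀ e.symm (F B₀ B e A₀) = A₀ := by
  unfold F
  rw [← Subgroup.comap_subtype,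
    Subgroup.comap_map_eq_self_of_injective B.subtype_injective,
    Subgroup.map_map]
  rw [Subgroup.map_map]
  have : (B₀.subtype.comp e.symm.toMonoidHom).comp e.toMonoidHom = B₀.subtype := by
    ext x; simp
  rw [this, Subgroup.subgroupOf_map_subtype, inf_eq_left.2 h]

noncomputable def F_iso (B₀ B : Subgroup C) (e : B₀ ≃* B) {A₀ : Subgroup C} (h : A₀ ≤ B₀) :
    F B₀ B e A₀ ≃* A₀ :=
  ((((A₀.subgroupOf B₀).map e.toMonoidHom).equivMapOfInjective B.subtype
      B.subtype_injective).symm.trans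
    (e.subgroupMap (A₀.subgroupOf B₀)).symm).trans (Subgroup.subgroupOfEquivOfLe h)

/-- The key fiber equivalence: subgroups contained in `B₀` that are copies of `A`
are in bijection with those contained in `B`, given `B₀ ≃* B`. -/
noncomputable def fiberEquiv (A B₀ B : Subgroup C) (e : B₀ ≃* B) :
    {A₀ : Subgroup C // A₀ ≤ B₀ ∧ IsCopy A₀ A} ≃ {A₀ : Subgroup C // A₀ ≤ B ∧ IsCopy A₀ A} where
  toFun := fun ⟨A₀, h1, h2⟩ =>
    ⟨F B₀ B e A₀, F_le B₀ B e A₀, h2.elim fun i => ⟨(F_iso B₀ B e h1).trans i⟩⟩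
  invFun := fun ⟨A₀, h1, h2⟩ =>
    ⟨F B B₀ e.symm A₀, F_le B B₀ e.symm A₀,
      h2.elim fun i => ⟨(F_iso B B₀ e.symm h1).trans i⟩⟩
  left_inv := fun ⟨A₀, h1, _⟩ => Subtype.ext (F_F B₀ B e h1)
  right_inv := fun ⟨A₀, h1, _⟩ => Subtype.ext (by
    have := F_F B B₀ e.symm (A₀ := A₀) h1
    simpa using this)

/-- Transporting along a global automorphism. -/
noncomputable def autEquiv (B : Subgroup C) (f : C ≃* C) (A₀ : Subgroup C) :
    {B₀ : Subgroup C // A₀ ≤ B₀ ∧ IsCopy B₀ B} ≃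
      {B₀ : Subgroup C // A₀.map f.toMonoidHom ≤ B₀ ∧ IsCopy B₀ B} where
  toFun := fun ⟨B₀, h1, h2⟩ =>
    ⟨B₀.map f.toMonoidHom,
      (Subgroup.map_le_map_iff_of_injective f.injective).2 h1,
      h2.elim fun i => ⟨(f.subgroupMap B₀).symm.trans i⟩⟩
  invFun := fun ⟨B₀, h1, h2⟩ =>
    ⟨B₀.map f.symm.toMonoidHom,
      by
        have : A₀ = (A₀.map f.toMonoidHom).map f.symm.toMonoidHom := by
          rw [Subgroup.map_map]
          have : f.symm.toMonoidHom.comp f.toMonoidHom = MonoidHom.id C := by ext x; simp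
          rw [this, Subgroup.map_id]
        rw [this]
        exact (Subgroup.map_le_map_iff_of_injective f.symm.injective).2 h1,
      h2.elim fun i => ⟨(f.symm.subgroupMap B₀).symm.trans i⟩⟩
  left_inv := fun ⟨B₀, h1, _⟩ => Subtype.ext (by
    show (B₀.map f.toMonoidHom).map f.symm.toMonoidHom = B₀
    rw [Subgroup.map_map]
    have : f.symm.toMonoidHom.comp f.toMonoidHom = MonoidHom.id C := by ext x; simp
    rw [this, Subgroup.map_id])
  right_inv := fun ⟨B₀, h1, _⟩ => Subtype.ext (by
    show (B₀.map f.symm.toMonoidHom).map f.toMonoidHom = B₀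
    rw [Subgroup.map_map]
    have : f.toMonoidHom.comp f.symm.toMonoidHom = MonoidHom.id C := by ext x; simp
    rw [this, Subgroup.map_id])

end StmtAux

theorem stmt2 {C : Type*} [Group C] [Finite C] (A B : Subgroup C)
    (htrans : ∀ A₀ A₁ : Subgroup C, IsCopy A₀ A → IsCopy A₁ A →
      ∃ f : C ≃* C, Subgroup.map f.toMonoidHom A₀ = A₁) :
    Nat.card {A₀ : Subgroup C // A₀ ≤ B ∧ IsCopy A₀ A} *
        Nat.card {B₀ : Subgroup C // IsCopy B₀ B} =
      Nat.card {A₀ : Subgroup C // IsCopy A₀ A} *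
        Nat.card {B₀ : Subgroup C // A ≤ B₀ ∧ IsCopy B₀ B} := by
  classical
  -- the set of incident pairs
  let S := {p : Subgroup C × Subgroup C // (p.1 ≤ p.2 ∧ IsCopy p.1 A) ∧ IsCopy p.2 B}
  -- first equivalence: fiber over copies of B
  have e1 : S ≃ {B₀ : Subgroup C // IsCopy B₀ B} ×
      {A₀ : Subgroup C // A₀ ≤ B ∧ IsCopy A₀ A} := by
    refine Equiv.trans ?_ (Equiv.trans (Equiv.sigmaCongrRight
      (fun b : {B₀ : Subgroup C // IsCopy B₀ B} =>
        StmtAux.fiberEquiv A b.1 B (Classical.choice b.2)))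
      (Equiv.sigmaEquivProd _ _))
    exact {
      toFun := fun ⟨⟨A₀, B₀⟩, ⟨h1, h2⟩, h3⟩ => ⟨⟨B₀, h3⟩, ⟨A₀, h1, h2⟩⟩
      invFun := fun ⟨⟨B₀, h3⟩, ⟨A₀, h1, h2⟩⟩ => ⟨⟨A₀, B₀⟩, ⟨h1, h2⟩, h3⟩
      left_inv := fun ⟨⟨A₀, B₀⟩, ⟨h1, h2⟩, h3⟩ => rfl
      right_inv := fun ⟨⟨B₀, h3⟩, ⟨A₀, h1, h2⟩⟩ => rfl }
  -- second equivalence: fiber over copies of A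
  have e2 : S ≃ {A₀ : Subgroup C // IsCopy A₀ A} ×
      {B₀ : Subgroup C // A ≤ B₀ ∧ IsCopy B₀ B} := by
    have key : ∀ a : {A₀ : Subgroup C // IsCopy A₀ A},
        {B₀ : Subgroup C // a.1 ≤ B₀ ∧ IsCopy B₀ B} ≃
          {B₀ : Subgroup C // A ≤ B₀ ∧ IsCopy B₀ B} := by
      intro a
      have h := htrans a.1 A a.2 ⟨MulEquiv.refl _⟩
      exact (StmtAux.autEquiv B h.choose a.1).trans (Equiv.subtypeEquivRight (by
        intro B₀; rw [h.choose_spec]))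
    refine Equiv.trans ?_ (Equiv.trans (Equiv.sigmaCongrRight key)
      (Equiv.sigmaEquivProd _ _))
    exact {
      toFun := fun ⟨⟨A₀, B₀⟩, ⟨h1, h2⟩, h3⟩ => ⟨⟨A₀, h2⟩, ⟨B₀, h1, h3⟩⟩
      invFun := fun ⟨⟨A₀, h2⟩, ⟨B₀, h1, h3⟩⟩ => ⟨⟨A₀, B₀⟩, ⟨h1, h2⟩, h3⟩
      left_inv := fun ⟨⟨A₀, B₀⟩, ⟨h1, h2⟩, h3⟩ => rfl
      right_inv := fun ⟨⟨A₀, h2⟩, ⟨B₀, h1, h3⟩⟩ => rfl }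
  calc Nat.card {A₀ : Subgroup C // A₀ ≤ B ∧ IsCopy A₀ A} *
        Nat.card {B₀ : Subgroup C // IsCopy B₀ B}
      = Nat.card S := by rw [Nat.card_congr e1, Nat.card_prod, mul_comm]
    _ = _ := by rw [Nat.card_congr e2, Nat.card_prod]
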